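/- Let Q be the n×n tridiagonal matrix with diagonal entries -v_1,...,-v_n (each v_i ≥ 2) and 1's on the super- and sub-diagonals. Then Q is negative definite. -/

import Mathlib

open Matrix

/-- The tridiagonal matrix with diagonal entries `-v i` and `1`'s on the
super- and sub-diagonal. -/
def triQ {n : ℕ} (v : Fin n → ℤ) : Matrix (Fin n) (Fin n) ℝ :=
  Matrix.of fun i j =>
    if i = j then -(v i : ℝ)
    else if (i : ℕ) + 1 = (j : ℕ) ∨ (j : ℕ) + 1 = (i : ℕ) then 1 else 0

/-- `Q` is negative definite: `xᵀQx < 0` for all nonzero real vectors `x`. -/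
theorem stmt4 {n : ℕ} (v : Fin n → ℤ) (hv : ∀ i, 2 ≤ v i) :
    ∀ x : Fin n → ℝ, x ≠ 0 → x ⬝ᵥ (triQ v).mulVec x < 0 := by
  intro x hx
  classical
  set y : ℕ → ℝ := fun k => if h : k < n then x ⟨k, h⟩ else 0 with hy
  set w : ℕ → ℝ := fun k => if h : k < n then (v ⟨k, h⟩ : ℝ) else 2 with hw
  have hyn : ∀ k, n ≤ k → y k = 0 := by
    intro k hk
    simp only [hy, dif_neg (not_lt.mpr hk)]
  have hw2 : ∀ k, (2 : ℝ) ≤ w k := by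
    intro k
    by_cases h : k < n
    · simp only [hw, dif_pos h]
      exact_mod_cast hv ⟨k, h⟩
    · simp only [hw, dif_neg h]
      exact le_rfl
  -- Step 1: express the quadratic form as a double sum over `range n`
  have hS : x ⬝ᵥ (triQ v).mulVec x =
      ∑ a ∈ Finset.range n, ∑ b ∈ Finset.range n,
        y a * ((if a = b then -(w a) else
          if a + 1 = b ∨ b + 1 = a then 1 else 0)) * y b := by
    rw [dotProduct]
    rw [show (∑ i : Fin n, x i * (triQ v *ᵥ x) i) =
        ∑ i : Fin n, ∑ b ∈ Finset.range n,
          y (i : ℕ) * ((if (i : ℕ) = b then -(w (i : ℕ)) else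
            if (i : ℕ) + 1 = b ∨ b + 1 = (i : ℕ) then 1 else 0)) * y b from ?_]
    · exact Fin.sum_univ_eq_sum_range
        (fun a => ∑ b ∈ Finset.range n, y a * ((if a = b then -(w a) else
          if a + 1 = b ∨ b + 1 = a then 1 else 0)) * y b) n
    refine Finset.sum_congr rfl fun i _ => ?_
    rw [mulVec, dotProduct, Finset.mul_sum]
    rw [show (∑ j : Fin n, x i * (triQ v i j * x j)) =
        ∑ j : Fin n, y ((i : ℕ)) * ((if (i : ℕ) = (j : ℕ) then -(w (i : ℕ)) else
          if (i : ℕ) + 1 = (j : ℕ) ∨ (j : ℕ) + 1 = (i : ℕ) then 1 else 0)) * y (j : ℕ) from ?_]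
    · exact Fin.sum_univ_eq_sum_range
        (fun b => y (i : ℕ) * ((if (i : ℕ) = b then -(w (i : ℕ)) else
          if (i : ℕ) + 1 = b ∨ b + 1 = (i : ℕ) then 1 else 0)) * y b) n
    refine Finset.sum_congr rfl fun j _ => ?_
    simp only [triQ, Matrix.of_apply, hy, hw, dif_pos i.isLt, dif_pos j.isLt,
      Fin.eta, Fin.ext_iff]
    ring
  -- Step 2: split the entry into three mutually exclusive pieces
  have hsplit : ∀ a b : ℕ,
      y a * ((if a = b then -(w a) else
        if a + 1 = b ∨ b + 1 = a then 1 else 0)) * y b =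
      (if a = b then -(w a) * y a * y b else 0) +
      (if a + 1 = b then y a * y b else 0) +
      (if b + 1 = a then y a * y b else 0) := by
    intro a b
    rcases eq_or_ne a b with h | h
    · subst h
      rw [if_pos rfl, if_pos rfl, if_neg (show ¬ (a + 1 = a) by omega)]
      ring
    · by_cases h1 : a + 1 = b
      · rw [if_neg h, if_pos (Or.inl h1), if_neg h, if_pos h1,
          if_neg (show ¬ (b + 1 = a) by omega)]
        ring
      · by_cases h2 : b + 1 = a
        · rw [if_neg h, if_pos (Or.inr h2), if_neg h, if_neg h1, if_pos h2]
          ring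
        · rw [if_neg h, if_neg (by tauto), if_neg h, if_neg h1, if_neg h2]
          ring
  have hS2 : x ⬝ᵥ (triQ v).mulVec x =
      (∑ a ∈ Finset.range n, -(w a) * y a * y a) +
      2 * ∑ a ∈ Finset.range n, y a * y (a + 1) := by
    rw [hS]
    have : ∀ a ∈ Finset.range n,
        (∑ b ∈ Finset.range n, y a * ((if a = b then -(w a) else
          if a + 1 = b ∨ b + 1 = a then 1 else 0)) * y b) =
        (-(w a) * y a * y a) + y a * y (a + 1) + y (a - 1) * y a * (if 1 ≤ a then 1 else 0) := by
      intro a ha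
      rw [Finset.mem_range] at ha
      simp only [hsplit]
      rw [Finset.sum_add_distrib, Finset.sum_add_distrib]
      congr 1
      · congr 1
        · rw [Finset.sum_ite_eq (Finset.range n) a (fun b => -(w a) * y a * y b),
            if_pos (Finset.mem_range.mpr ha)]
        · rw [Finset.sum_ite_eq (Finset.range n) (a + 1) (fun b => y a * y b)]
          by_cases h : a + 1 < n
          · rw [if_pos (Finset.mem_range.mpr h)]
          · rw [if_neg (by simpa using h), hyn (a + 1) (by omega), mul_zero]
      · -- ∑ b, if b + 1 = a then y a * y b else 0
        by_cases h : 1 ≤ a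
        · have hmem : a - 1 ∈ Finset.range n := Finset.mem_range.mpr (by omega)
          rw [if_pos h, mul_one]
          rw [show (∑ b ∈ Finset.range n, if b + 1 = a then y a * y b else 0) =
            ∑ b ∈ Finset.range n, if a - 1 = b then y a * y b else 0 by
              refine Finset.sum_congr rfl fun b _ => ?_
              congr 1
              simp only [eq_iff_iff]
              omega]
          rw [Finset.sum_ite_eq (Finset.range n) (a - 1) (fun b => y a * y b), if_pos hmem]
          ring
        · rw [if_neg h, mul_zero]
          refine Finset.sum_eq_zero fun b _ => ?_
          rw [if_neg (by omega)]
    rw [Finset.sum_congr rfl this]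
    rw [Finset.sum_add_distrib, Finset.sum_add_distrib]
    have h3 : (∑ a ∈ Finset.range n, y (a - 1) * y a * (if 1 ≤ a then 1 else 0)) =
        ∑ a ∈ Finset.range n, y a * y (a + 1) := by
      rcases Nat.eq_zero_or_pos n with h | h
      · simp [h]
      · obtain ⟨m, rfl⟩ : ∃ m, n = m + 1 := ⟨n - 1, by omega⟩
        rw [Finset.sum_range_succ' (fun a => y (a - 1) * y a * (if 1 ≤ a then 1 else 0)) m,
          Finset.sum_range_succ (fun a => y a * y (a + 1)) m, hyn (m + 1) le_rfl]
        simp only [Nat.add_sub_cancel, mul_zero, add_zero]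
        rw [if_neg (by omega : ¬ (1 : ℕ) ≤ 0), mul_zero, add_zero]
        refine Finset.sum_congr rfl fun a _ => ?_
        rw [if_pos (by omega : 1 ≤ a + 1)]
        ring
    rw [h3]
    ring
  -- Step 3: the key algebraic identity
  have e1 : ∑ k ∈ Finset.range n, (y (k + 1))^2 =
      ∑ k ∈ Finset.range n, (y k)^2 - (y 0)^2 := by
    have h1 := Finset.sum_range_succ' (fun k => (y k)^2) n
    have h2 := Finset.sum_range_succ (fun k => (y k)^2) n
    have h3 : (y n)^2 = 0 := by rw [hyn n (le_refl n)]; ring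
    rw [h2, h3] at h1
    linarith
  have e2 : ∑ k ∈ Finset.range n, (y k - y (k + 1))^2 =
      ∑ k ∈ Finset.range n, (y k)^2 + ∑ k ∈ Finset.range n, (y (k + 1))^2
        - 2 * ∑ k ∈ Finset.range n, y k * y (k + 1) := by
    rw [show (∑ k ∈ Finset.range n, (y k - y (k + 1))^2) =
      ∑ k ∈ Finset.range n, ((y k)^2 + (y (k + 1))^2 - 2 * (y k * y (k + 1))) from
      Finset.sum_congr rfl fun k _ => by ring]
    rw [Finset.sum_sub_distrib, Finset.sum_add_distrib, ← Finset.mul_sum]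
  have hfinal : x ⬝ᵥ (triQ v).mulVec x =
      (∑ a ∈ Finset.range n, (2 - w a) * (y a)^2) - (y 0)^2
        - ∑ k ∈ Finset.range n, (y k - y (k + 1))^2 := by
    rw [hS2, e2, e1]
    rw [show (∑ a ∈ Finset.range n, (2 - w a) * (y a)^2) =
      ∑ a ∈ Finset.range n, (2 * (y a)^2 - w a * (y a)^2) from
      Finset.sum_congr rfl fun a _ => by ring]
    rw [Finset.sum_sub_distrib, ← Finset.mul_sum]
    rw [show (∑ a ∈ Finset.range n, -(w a) * y a * y a) =
      -∑ a ∈ Finset.range n, w a * (y a)^2 by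
        rw [← Finset.sum_neg_distrib]
        exact Finset.sum_congr rfl fun a _ => by ring]
    ring
  -- Step 4: conclude by contradiction
  by_contra hcon
  push_neg at hcon
  rw [hfinal] at hcon
  have hA : (∑ a ∈ Finset.range n, (2 - w a) * (y a)^2) ≤ 0 :=
    Finset.sum_nonpos fun a _ =>
      mul_nonpos_of_nonpos_of_nonneg (by linarith [hw2 a]) (sq_nonneg _)
  have hC : (0:ℝ) ≤ ∑ k ∈ Finset.range n, (y k - y (k + 1))^2 :=
    Finset.sum_nonneg fun k _ => sq_nonneg _
  have hy0 : y 0 = 0 := by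
    have : (y 0)^2 ≤ 0 := by linarith
    have := sq_nonneg (y 0)
    nlinarith
  have hCzero : ∑ k ∈ Finset.range n, (y k - y (k + 1))^2 = 0 := by
    nlinarith [sq_nonneg (y 0)]
  have hstep : ∀ k ∈ Finset.range n, (y k - y (k + 1))^2 = 0 :=
    (Finset.sum_eq_zero_iff_of_nonneg fun k _ => sq_nonneg _).mp hCzero
  have hall : ∀ k, y k = 0 := by
    intro k
    induction k with
    | zero => exact hy0
    | succ m ih =>
      by_cases h : m < n
      · have := hstep m (Finset.mem_range.mpr h)
        have h2 : y m - y (m + 1) = 0 := by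
          nlinarith [sq_nonneg (y m - y (m + 1))]
        linarith
      · exact hyn _ (by omega)
  apply hx
  funext i
  have := hall i
  simp only [hy, dif_pos i.isLt] at this
  simpa using this
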